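/- With d_n the number of bimultus strings of length n, a_n their total bitsum, and b_n their total squared bitsum, set c_n = d_n b_n - a_n^2. Then lim_{n→∞} c_n/(n d_n^2) = (5 + 3√5)/40. -/

import Mathlib

open scoped Classical

def Multus {n : ℕ} (f : Fin n → Bool) : Prop :=
  ∀ i : Fin n, f i = true →
    ∃ j : Fin n, (j.val = i.val + 1 ∨ j.val + 1 = i.val) ∧ f j = true

def ZeroNbr {n : ℕ} (f : Fin n → Bool) : Prop :=
  ∀ i : Fin n, f i = false →
    ∃ j : Fin n, (j.val = i.val + 1 ∨ j.val + 1 = i.val) ∧ f j = false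

def Bimultus {n : ℕ} (f : Fin n → Bool) : Prop := Multus f ∧ ZeroNbr f

def bitsum {n : ℕ} (f : Fin n → Bool) : ℕ := (Finset.univ.filter fun i => f i = true).card

/-- non-dependent snoc -/
def sn {n : ℕ} (f : Fin n → Bool) (b : Bool) : Fin (n+1) → Bool := Fin.snoc f b

lemma sn_castSucc {n} (f : Fin n → Bool) (b : Bool) (i : Fin n) :
    sn f b (Fin.castSucc i) = f i := Fin.snoc_castSucc ..

lemma sn_last {n} (f : Fin n → Bool) (b : Bool) : sn f b (Fin.last n) = b := Fin.snoc_last ..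

lemma sn_mk {n} (f : Fin n → Bool) (b : Bool) (k : ℕ) (h : k < n + 1) (h' : k < n) :
    sn f b ⟨k, h⟩ = f ⟨k, h'⟩ := sn_castSucc f b ⟨k, h'⟩

/-- every position has an equal neighbour -/
def Gd {n : ℕ} (f : Fin n → Bool) : Prop :=
  ∀ i : Fin n, ∃ j : Fin n, (j.val = i.val + 1 ∨ j.val + 1 = i.val) ∧ f j = f i

/-- every position except possibly the last has an equal neighbour -/
def Pre {n : ℕ} (f : Fin n → Bool) : Prop :=
  ∀ i : Fin n, i.val + 1 < n → ∃ j : Fin n, (j.val = i.val + 1 ∨ j.val + 1 = i.val) ∧ f j = f i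

/-- the last position has an equal neighbour (necessarily on the left) -/
def LN {n : ℕ} (f : Fin (n+1) → Bool) : Prop :=
  ∃ j : Fin (n+1), j.val + 1 = n ∧ f j = f (Fin.last n)

lemma bimultus_iff_gd {n} (f : Fin n → Bool) : Bimultus f ↔ Gd f := by
  constructor
  · rintro ⟨hm, hz⟩ i
    cases hfi : f i with
    | false => obtain ⟨j, hj, hfj⟩ := hz i hfi; exact ⟨j, hj, hfj⟩
    | true => obtain ⟨j, hj, hfj⟩ := hm i hfi; exact ⟨j, hj, hfj⟩
  · intro h
    constructor <;> intro i hfi <;> obtain ⟨j, hj, hfj⟩ := h i <;>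
      exact ⟨j, hj, hfj.trans hfi⟩

lemma gd_pre {n} {f : Fin n → Bool} (h : Gd f) : Pre f := fun i _ => h i

lemma gd_iff {n} (f : Fin (n+1) → Bool) : Gd f ↔ Pre f ∧ LN f := by
  constructor
  · intro h
    refine ⟨gd_pre h, ?_⟩
    obtain ⟨j, hj, hfj⟩ := h (Fin.last n)
    refine ⟨j, ?_, hfj⟩
    rcases hj with hj | hj
    · exact absurd hj (by have := j.isLt; simp [Fin.last] at *; omega)
    · simpa [Fin.last] using hj
  · rintro ⟨hp, j, hj, hfj⟩ i
    by_cases hi : i.val + 1 < n + 1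
    · exact hp i hi
    · have : i = Fin.last n := Fin.ext (by have := i.isLt; simp [Fin.last]; omega)
      subst this
      exact ⟨j, Or.inr (by simpa [Fin.last] using hj), hfj⟩

lemma ln_sn {n} (f : Fin (n+1) → Bool) (b : Bool) :
    LN (sn f b) ↔ f (Fin.last n) = b := by
  constructor
  · rintro ⟨j, hj, hfj⟩
    have hjv : j.val = n := by omega
    have hj' : j = Fin.castSucc (Fin.last n) := Fin.ext (by simp [Fin.last, hjv])
    rw [hj', sn_castSucc, sn_last] at hfj
    exact hfj
  · intro h
    refine ⟨Fin.castSucc (Fin.last n), by simp [Fin.last], ?_⟩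
    rw [sn_castSucc, sn_last, h]

lemma pre_sn {n} (f : Fin (n+1) → Bool) (b : Bool) :
    Pre (sn f b) ↔ Pre f ∧ (LN f ∨ f (Fin.last n) = b) := by
  constructor
  · intro h
    constructor
    · intro i hi
      obtain ⟨j, hj, hfj⟩ := h (Fin.castSucc i) (by simpa using Nat.lt_succ_of_lt hi)
      have hjv : j.val < n + 1 := by
        rcases hj with hj | hj <;> simp at hj <;> omega
      refine ⟨⟨j.val, hjv⟩, by simpa using hj, ?_⟩
      have e1 : sn f b j = f ⟨j.val, hjv⟩ := sn_mk f b j.val j.isLt hjv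
      have e2 : sn f b (Fin.castSucc i) = f i := sn_castSucc ..
      rw [e1, e2] at hfj; exact hfj
    · by_cases hb : f (Fin.last n) = b
      · exact Or.inr hb
      · left
        obtain ⟨j, hj, hfj⟩ := h (Fin.castSucc (Fin.last n)) (by simp [Fin.last])
        have e2 : sn f b (Fin.castSucc (Fin.last n)) = f (Fin.last n) := sn_castSucc ..
        rcases hj with hj | hj
        · exfalso
          have hje : j = Fin.last (n+1) := Fin.ext (by simp [Fin.last] at hj ⊢; omega)
          rw [hje, sn_last, e2] at hfj
          exact hb hfj.symm
        · have hjv : j.val < n + 1 := by simp [Fin.last] at hj; omega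
          have e1 : sn f b j = f ⟨j.val, hjv⟩ := sn_mk f b j.val j.isLt hjv
          rw [e1, e2] at hfj
          exact ⟨⟨j.val, hjv⟩, by simp [Fin.last] at hj ⊢; omega, hfj⟩
  · rintro ⟨hp, hor⟩ i hi
    have hi' : i.val < n + 1 := by omega
    by_cases hin : i.val + 1 < n + 1
    · obtain ⟨j, hj, hfj⟩ := hp ⟨i.val, hi'⟩ hin
      refine ⟨Fin.castSucc j, by simpa using hj, ?_⟩
      have e1 : sn f b (Fin.castSucc j) = f j := sn_castSucc ..
      have e2 : sn f b i = f ⟨i.val, hi'⟩ := sn_mk f b i.val i.isLt hi'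
      rw [e1, e2]; exact hfj
    · have hiv : i.val = n := by omega
      have e2 : sn f b i = f (Fin.last n) := by
        have hie : i = Fin.castSucc (Fin.last n) := Fin.ext (by simp [Fin.last, hiv])
        rw [hie, sn_castSucc]
      rcases hor with ⟨j, hj, hfj⟩ | hb
      · refine ⟨Fin.castSucc j, Or.inr (by simp [hiv]; omega), ?_⟩
        rw [sn_castSucc, e2]; exact hfj
      · refine ⟨Fin.last (n+1), Or.inl (by simp [Fin.last, hiv]), ?_⟩
        rw [sn_last, e2, hb]

lemma gd_sn {n} (f : Fin (n+1) → Bool) (b : Bool) :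
    Gd (sn f b) ↔ Pre f ∧ f (Fin.last n) = b := by
  rw [gd_iff, pre_sn, ln_sn]
  constructor
  · rintro ⟨⟨hp, -⟩, hl⟩; exact ⟨hp, hl⟩
  · rintro ⟨hp, hl⟩; exact ⟨⟨hp, Or.inr hl⟩, hl⟩

lemma gd_ln {n} {f : Fin (n+1) → Bool} (h : Gd f) : LN f := ((gd_iff f).mp h).2

lemma pre_not_gd_sn {n} (f : Fin (n+1) → Bool) (b : Bool) :
    (Pre (sn f b) ∧ ¬ Gd (sn f b)) ↔ (Gd f ∧ f (Fin.last n) = !b) := by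
  rw [pre_sn, gd_sn, gd_iff]
  constructor
  · rintro ⟨⟨hp, hor⟩, hng⟩
    have hl : f (Fin.last n) ≠ b := fun hb => hng ⟨hp, hb⟩
    have hln : LN f := by rcases hor with h | h; exact h; exact absurd h hl
    exact ⟨⟨hp, hln⟩, by cases hfb : f (Fin.last n) <;> cases b <;> simp_all⟩
  · rintro ⟨⟨hp, hln⟩, hl⟩
    refine ⟨⟨hp, Or.inl hln⟩, fun hc => ?_⟩
    have hb := hc.2
    rw [hb] at hl; cases b <;> simp_all

lemma not_gd_one (f : Fin 1 → Bool) : ¬ Gd f := by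
  intro h
  obtain ⟨j, hj, -⟩ := h 0
  have := j.isLt
  simp [Fin.val_eq_zero] at hj

lemma pre_one (f : Fin 1 → Bool) : Pre f := by
  intro i hi
  simp at hi
noncomputable def ZA (n : ℕ) (b : Bool) (k : ℕ) : ℕ :=
  ∑ f : Fin (n+1) → Bool, if Gd f ∧ f (Fin.last n) = b then bitsum f ^ k else 0

noncomputable def ZP (n : ℕ) (b : Bool) (k : ℕ) : ℕ :=
  ∑ f : Fin (n+1) → Bool, if Pre f ∧ ¬ Gd f ∧ f (Fin.last n) = b then bitsum f ^ k else 0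

def snEquiv (n : ℕ) : (Fin n → Bool) × Bool ≃ (Fin (n+1) → Bool) where
  toFun p := sn p.1 p.2
  invFun f := (fun i => f (Fin.castSucc i), f (Fin.last n))
  left_inv p := by
    ext i
    · exact sn_castSucc p.1 p.2 i
    · exact sn_last p.1 p.2
  right_inv f := Fin.snoc_init_self f

lemma sum_sn {M : Type*} [AddCommMonoid M] (n : ℕ) (g : (Fin (n+1) → Bool) → M) :
    ∑ f : Fin (n+1) → Bool, g f = ∑ f : Fin n → Bool, (g (sn f false) + g (sn f true)) := by
  rw [← Equiv.sum_comp (snEquiv n) g, Fintype.sum_prod_type]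
  refine Finset.sum_congr rfl fun f _ => ?_
  rw [Fintype.sum_bool]
  exact add_comm _ _

lemma bitsum_eq {n : ℕ} (f : Fin n → Bool) :
    bitsum f = ∑ i, (if f i = true then 1 else 0) := Finset.card_filter _ _

lemma bitsum_sn {n : ℕ} (f : Fin n → Bool) (b : Bool) :
    bitsum (sn f b) = bitsum f + (if b = true then 1 else 0) := by
  rw [bitsum_eq, bitsum_eq, Fin.sum_univ_castSucc]
  simp [sn_castSucc, sn_last]

lemma sum_ite_add {α : Type*} [Fintype α] (P : α → Prop) [DecidablePred P] (u v : α → ℕ) :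
    (∑ x : α, if P x then u x + v x else 0)
      = (∑ x : α, if P x then u x else 0) + (∑ x : α, if P x then v x else 0) := by
  rw [← Finset.sum_add_distrib]
  exact Finset.sum_congr rfl fun x _ => by split <;> simp

lemma ZA_sn (n : ℕ) (b : Bool) (g : ℕ → ℕ) :
    (∑ f : Fin (n+2) → Bool, if Gd f ∧ f (Fin.last (n+1)) = b then g (bitsum f) else 0)
  = (∑ f : Fin (n+1) → Bool,
      if Gd f ∧ f (Fin.last n) = b then g (bitsum f + (if b = true then 1 else 0)) else 0)
  + (∑ f : Fin (n+1) → Bool,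
      if Pre f ∧ ¬ Gd f ∧ f (Fin.last n) = b then g (bitsum f + (if b = true then 1 else 0)) else 0) := by
  rw [sum_sn (n+1), ← Finset.sum_add_distrib]
  refine Finset.sum_congr rfl fun f _ => ?_
  have key : ∀ c : Bool, (Gd (sn f c) ∧ sn f c (Fin.last (n+1)) = b)
      ↔ (Pre f ∧ f (Fin.last n) = c ∧ c = b) := by
    intro c
    rw [sn_last, gd_sn]
    tauto
  rw [if_congr (key false) rfl rfl, if_congr (key true) rfl rfl, bitsum_sn, bitsum_sn]
  by_cases hg : Gd f <;> by_cases hp : Pre f <;> cases hl : f (Fin.last n) <;> cases b <;>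
    simp_all [gd_pre]

lemma ZP_sn (n : ℕ) (b : Bool) (g : ℕ → ℕ) :
    (∑ f : Fin (n+2) → Bool, if Pre f ∧ ¬ Gd f ∧ f (Fin.last (n+1)) = b then g (bitsum f) else 0)
  = (∑ f : Fin (n+1) → Bool,
      if Gd f ∧ f (Fin.last n) = !b then g (bitsum f + (if b = true then 1 else 0)) else 0) := by
  rw [sum_sn (n+1)]
  refine Finset.sum_congr rfl fun f _ => ?_
  have key : ∀ c : Bool, (Pre (sn f c) ∧ ¬ Gd (sn f c) ∧ sn f c (Fin.last (n+1)) = b)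
      ↔ ((Gd f ∧ f (Fin.last n) = !c) ∧ c = b) := by
    intro c
    rw [sn_last]
    have := pre_not_gd_sn f c
    tauto
  rw [if_congr (key false) rfl rfl, if_congr (key true) rfl rfl, bitsum_sn, bitsum_sn]
  by_cases hg : Gd f <;> cases hl : f (Fin.last n) <;> cases b <;> simp_all

-- base cases
lemma ZA_zero (b : Bool) (k : ℕ) : ZA 0 b k = 0 := by
  refine Finset.sum_eq_zero fun f _ => ?_
  rw [if_neg]
  rintro ⟨hg, -⟩
  exact not_gd_one f hg

lemma bitsum_const (b : Bool) : bitsum (fun _ : Fin 1 => b) = if b = true then 1 else 0 := by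
  rw [bitsum_eq]
  simp

lemma ZP_zero (b : Bool) (k : ℕ) : ZP 0 b k = (if b = true then 1 else 0) ^ k := by
  rw [ZP, ← Equiv.sum_comp (Equiv.funUnique (Fin 1) Bool).symm]
  rw [Fintype.sum_bool]
  have h1 : ∀ c : Bool, (Equiv.funUnique (Fin 1) Bool).symm c = fun _ : Fin 1 => c := fun _ => rfl
  rw [h1, h1]
  have h2 : ∀ c : Bool, (Pre (fun _ : Fin 1 => c) ∧ ¬ Gd (fun _ : Fin 1 => c)
      ∧ (fun _ : Fin 1 => c) (Fin.last 0) = b) ↔ (c = b) := fun c =>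
    ⟨fun h => h.2.2, fun h => ⟨pre_one _, not_gd_one _, h⟩⟩
  rw [if_congr (h2 true) rfl rfl, if_congr (h2 false) rfl rfl, bitsum_const, bitsum_const]
  cases b <;> simp
-- scalar recurrences
lemma sum_pow_succ_one (n : ℕ) (P : (Fin (n+1) → Bool) → Prop) [DecidablePred P] :
    (∑ f : Fin (n+1) → Bool, if P f then (bitsum f + 1) ^ 1 else 0)
      = (∑ f : Fin (n+1) → Bool, if P f then bitsum f ^ 1 else 0)
      + (∑ f : Fin (n+1) → Bool, if P f then bitsum f ^ 0 else 0) := by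
  rw [← sum_ite_add]
  exact Finset.sum_congr rfl fun f _ => by split <;> ring

lemma sum_pow_succ_two (n : ℕ) (P : (Fin (n+1) → Bool) → Prop) [DecidablePred P] :
    (∑ f : Fin (n+1) → Bool, if P f then (bitsum f + 1) ^ 2 else 0)
      = (∑ f : Fin (n+1) → Bool, if P f then bitsum f ^ 2 else 0)
      + ((∑ f : Fin (n+1) → Bool, if P f then bitsum f ^ 1 else 0)
      + ((∑ f : Fin (n+1) → Bool, if P f then bitsum f ^ 1 else 0)
      + (∑ f : Fin (n+1) → Bool, if P f then bitsum f ^ 0 else 0))) := by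
  rw [← sum_ite_add, ← sum_ite_add, ← sum_ite_add]
  exact Finset.sum_congr rfl fun f _ => by split <;> ring

lemma ZA_rec_f (n k : ℕ) : ZA (n+1) false k = ZA n false k + ZP n false k := by
  have h := ZA_sn n false (fun s => s ^ k)
  simpa [ZA, ZP] using h

lemma ZA_rec_t0 (n : ℕ) : ZA (n+1) true 0 = ZA n true 0 + ZP n true 0 := by
  have h := ZA_sn n true (fun s => s ^ 0)
  simpa [ZA, ZP] using h

lemma ZA_rec_t1 (n : ℕ) :
    ZA (n+1) true 1 = (ZA n true 1 + ZA n true 0) + (ZP n true 1 + ZP n true 0) := by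
  have h := ZA_sn n true (fun s => s ^ 1)
  simp only [if_true] at h
  rw [ZA, ZA, ZA, ZP, ZP, h]
  exact congrArg₂ (· + ·) (sum_pow_succ_one n _) (sum_pow_succ_one n _)

lemma ZA_rec_t2 (n : ℕ) :
    ZA (n+1) true 2 = (ZA n true 2 + (ZA n true 1 + (ZA n true 1 + ZA n true 0)))
      + (ZP n true 2 + (ZP n true 1 + (ZP n true 1 + ZP n true 0))) := by
  have h := ZA_sn n true (fun s => s ^ 2)
  simp only [if_true] at h
  rw [ZA, ZA, ZA, ZA, ZP, ZP, ZP, h]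
  exact congrArg₂ (· + ·) (sum_pow_succ_two n _) (sum_pow_succ_two n _)

lemma ZP_rec_f (n k : ℕ) : ZP (n+1) false k = ZA n true k := by
  have h := ZP_sn n false (fun s => s ^ k)
  simpa [ZA, ZP] using h

lemma ZP_rec_t0 (n : ℕ) : ZP (n+1) true 0 = ZA n false 0 := by
  have h := ZP_sn n true (fun s => s ^ 0)
  simpa [ZA, ZP] using h

lemma ZP_rec_t1 (n : ℕ) : ZP (n+1) true 1 = ZA n false 1 + ZA n false 0 := by
  have h := ZP_sn n true (fun s => s ^ 1)
  simp only [if_true, Bool.not_true] at h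
  rw [ZP, ZA, ZA, h]
  exact sum_pow_succ_one n _

lemma ZP_rec_t2 (n : ℕ) :
    ZP (n+1) true 2 = ZA n false 2 + (ZA n false 1 + (ZA n false 1 + ZA n false 0)) := by
  have h := ZP_sn n true (fun s => s ^ 2)
  simp only [if_true, Bool.not_true] at h
  rw [ZP, ZA, ZA, ZA, h]
  exact sum_pow_succ_two n _

-- the period-6 sequence
def pp : ℕ → ℤ
  | 0 => 0
  | 1 => 1
  | (n+2) => pp (n+1) - pp n

@[simp] lemma pp_zero : pp 0 = 0 := rfl
@[simp] lemma pp_one : pp 1 = 1 := rfl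
lemma pp_add_two (n : ℕ) : pp (n+2) = pp (n+1) - pp n := rfl

def Fz (n : ℕ) : ℤ := Nat.fib n

@[simp] lemma Fz_zero : Fz 0 = 0 := rfl
@[simp] lemma Fz_one : Fz 1 = 1 := rfl
lemma Fz_add_two (n : ℕ) : Fz (n+2) = Fz (n+1) + Fz n := by
  unfold Fz
  rw [Nat.fib_add_two]
  push_cast
  ring

/-- the twelve closed forms -/
lemma closed_forms (n : ℕ) :
    (40 * (ZA n false 0 : ℤ) = 40 * Fz n) ∧
    (40 * (ZA n false 1 : ℤ) = 20*n * Fz n - 10 * Fz (n+1) - 20 * pp n + 10 * pp (n+1)) ∧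
    (40 * (ZA n false 2 : ℤ) = (10*n^2 + 2*n + 7) * Fz n + (5 - 4*n) * Fz (n+1)
        - (20*n + 5) * pp n + (10*n - 5) * pp (n+1)) ∧
    (40 * (ZP n false 0 : ℤ) = 40 * Fz (n+1) - 40 * Fz n) ∧
    (40 * (ZP n false 1 : ℤ) = -(20*n + 10) * Fz n + (20*n + 20) * Fz (n+1)
        + 10 * pp n - 20 * pp (n+1)) ∧
    (40 * (ZP n false 2 : ℤ) = -(10*n^2 + 6*n + 6) * Fz n + (10*n^2 + 22*n + 15) * Fz (n+1)
        + 10*n * pp n - (20*n + 15) * pp (n+1)) ∧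
    (40 * (ZA n true 0 : ℤ) = 40 * Fz n) ∧
    (40 * (ZA n true 1 : ℤ) = (20*n + 40) * Fz n + 10 * Fz (n+1) + 20 * pp n - 10 * pp (n+1)) ∧
    (40 * (ZA n true 2 : ℤ) = (10*n^2 + 42*n + 47) * Fz n + (16*n + 25) * Fz (n+1)
        + (20*n + 35) * pp n - (10*n + 25) * pp (n+1)) ∧
    (40 * (ZP n true 0 : ℤ) = 40 * Fz (n+1) - 40 * Fz n) ∧
    (40 * (ZP n true 1 : ℤ) = -(20*n + 30) * Fz n + (20*n + 20) * Fz (n+1)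
        - 10 * pp n + 20 * pp (n+1)) ∧
    (40 * (ZP n true 2 : ℤ) = -(10*n^2 + 26*n + 26) * Fz n + (10*n^2 + 22*n + 15) * Fz (n+1)
        - (10*n + 20) * pp n + (20*n + 25) * pp (n+1)) := by
  induction n with
  | zero =>
    norm_num [ZA_zero, ZP_zero]
  | succ n ih =>
    obtain ⟨hAf0, hAf1, hAf2, hPf0, hPf1, hPf2, hAt0, hAt1, hAt2, hPt0, hPt1, hPt2⟩ := ih
    refine ⟨?_, ?_, ?_, ?_, ?_, ?_, ?_, ?_, ?_, ?_, ?_, ?_⟩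
    · rw [ZA_rec_f]
      push_cast
      linear_combination hAf0 + hPf0
    · rw [ZA_rec_f]
      push_cast
      rw [show n+1+1 = n+2 from rfl, Fz_add_two, pp_add_two]
      linear_combination hAf1 + hPf1
    · rw [ZA_rec_f]
      push_cast
      rw [show n+1+1 = n+2 from rfl, Fz_add_two, pp_add_two]
      linear_combination hAf2 + hPf2
    · rw [ZP_rec_f]
      push_cast
      rw [show n+1+1 = n+2 from rfl, Fz_add_two]
      linear_combination hAt0
    · rw [ZP_rec_f]
      push_cast
      rw [show n+1+1 = n+2 from rfl, Fz_add_two, pp_add_two]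
      linear_combination hAt1
    · rw [ZP_rec_f]
      push_cast
      rw [show n+1+1 = n+2 from rfl, Fz_add_two, pp_add_two]
      linear_combination hAt2
    · rw [ZA_rec_t0]
      push_cast
      linear_combination hAt0 + hPt0
    · rw [ZA_rec_t1]
      push_cast
      rw [show n+1+1 = n+2 from rfl, Fz_add_two, pp_add_two]
      linear_combination hAt1 + hAt0 + hPt1 + hPt0
    · rw [ZA_rec_t2]
      push_cast
      rw [show n+1+1 = n+2 from rfl, Fz_add_two, pp_add_two]
      linear_combination hAt2 + 2*hAt1 + hAt0 + hPt2 + 2*hPt1 + hPt0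
    · rw [ZP_rec_t0]
      push_cast
      rw [show n+1+1 = n+2 from rfl, Fz_add_two]
      linear_combination hAf0
    · rw [ZP_rec_t1]
      push_cast
      rw [show n+1+1 = n+2 from rfl, Fz_add_two, pp_add_two]
      linear_combination hAf1 + hAf0
    · rw [ZP_rec_t2]
      push_cast
      rw [show n+1+1 = n+2 from rfl, Fz_add_two, pp_add_two]
      linear_combination hAf2 + 2*hAf1 + hAf0
noncomputable def bimultusCount (n : ℕ) : ℕ := Nat.card {f : Fin n → Bool // Bimultus f}

noncomputable def bimultusBitsum (n : ℕ) : ℕ :=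
  ∑ f : Fin n → Bool, if Bimultus f then bitsum f else 0

noncomputable def bimultusBitsumSq (n : ℕ) : ℕ :=
  ∑ f : Fin n → Bool, if Bimultus f then (bitsum f) ^ 2 else 0

/-- `c n = d n * b n - a n ^ 2`, so `c n / d n ^ 2` is the bitsum variance. -/
noncomputable def bimultusC (n : ℕ) : ℤ :=
  (bimultusCount n : ℤ) * bimultusBitsumSq n - (bimultusBitsum n : ℤ) ^ 2

lemma count_eq (m : ℕ) : bimultusCount (m+1) = ZA m true 0 + ZA m false 0 := by
  rw [bimultusCount, Nat.card_eq_fintype_card, Fintype.card_subtype, Finset.card_filter, ZA, ZA,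
    ← Finset.sum_add_distrib]
  refine Finset.sum_congr rfl fun f _ => ?_
  have hbg := bimultus_iff_gd f
  by_cases hg : Gd f <;> cases hl : f (Fin.last m) <;> simp [hbg, hg, hl]

lemma bitsum_eq2 (m : ℕ) : bimultusBitsum (m+1) = ZA m true 1 + ZA m false 1 := by
  rw [bimultusBitsum, ZA, ZA, ← Finset.sum_add_distrib]
  refine Finset.sum_congr rfl fun f _ => ?_
  have hbg := bimultus_iff_gd f
  by_cases hg : Gd f <;> cases hl : f (Fin.last m) <;> simp [hbg, hg, hl]

lemma bitsumSq_eq2 (m : ℕ) : bimultusBitsumSq (m+1) = ZA m true 2 + ZA m false 2 := by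
  rw [bimultusBitsumSq, ZA, ZA, ← Finset.sum_add_distrib]
  refine Finset.sum_congr rfl fun f _ => ?_
  have hbg := bimultus_iff_gd f
  by_cases hg : Gd f <;> cases hl : f (Fin.last m) <;> simp [hbg, hg, hl]

lemma d_closed (m : ℕ) : (bimultusCount (m+1) : ℤ) = 2 * Fz m := by
  obtain ⟨hAf0, _, _, _, _, _, hAt0, _, _, _, _, _⟩ := closed_forms m
  rw [count_eq]
  push_cast
  linarith

lemma a_closed (m : ℕ) : (bimultusBitsum (m+1) : ℤ) = (m + 1) * Fz m := by
  obtain ⟨_, hAf1, _, _, _, _, _, hAt1, _, _, _, _⟩ := closed_forms m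
  rw [bitsum_eq2]
  push_cast
  linarith

lemma b_closed (m : ℕ) : 40 * (bimultusBitsumSq (m+1) : ℤ)
    = (20*m^2 + 44*m + 54) * Fz m + (12*m + 30) * Fz (m+1) + 30 * pp m - 30 * pp (m+1) := by
  obtain ⟨_, _, hAf2, _, _, _, _, _, hAt2, _, _, _⟩ := closed_forms m
  rw [bitsumSq_eq2]
  push_cast
  linarith
open Filter Real

lemma fib_real_pos {m : ℕ} (hm : 1 ≤ m) : (0:ℝ) < (Nat.fib m : ℝ) := by
  have : 0 < Nat.fib m := Nat.fib_pos.mpr hm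
  exact_mod_cast this

lemma fib_real_one_le {m : ℕ} (hm : 1 ≤ m) : (1:ℝ) ≤ (Nat.fib m : ℝ) := by
  have : 1 ≤ Nat.fib m := Nat.fib_pos.mpr hm
  exact_mod_cast this

lemma absConj_lt_one : |goldenConj| < 1 := by
  rw [abs_lt]
  constructor
  · exact neg_one_lt_goldenConj
  · linarith [goldenConj_neg]

lemma ratio_tendsto :
    Tendsto (fun m : ℕ => (Nat.fib (m+1) : ℝ) / (Nat.fib m : ℝ)) atTop (nhds goldenRatio) := by
  have h0 : Tendsto (fun m : ℕ => (Nat.fib (m+1) : ℝ) / (Nat.fib m : ℝ) - goldenRatio)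
      atTop (nhds 0) := by
    apply squeeze_zero_norm' (a := fun m : ℕ => |goldenConj| ^ m)
    · filter_upwards [eventually_ge_atTop 1] with m hm
      have hf := fib_real_pos hm
      have key : (Nat.fib (m+1) : ℝ) / (Nat.fib m : ℝ) - goldenRatio
          = goldenConj ^ m / (Nat.fib m : ℝ) := by
        have hgc := fib_succ_sub_goldenRatio_mul_fib m
        rw [eq_div_iff hf.ne', sub_mul, div_mul_cancel₀ _ hf.ne']
        linarith
      rw [key, Real.norm_eq_abs, abs_div, abs_pow, abs_of_pos hf]
      exact div_le_self (pow_nonneg (abs_nonneg _) m) (fib_real_one_le hm)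
    · exact tendsto_pow_atTop_nhds_zero_of_lt_one (abs_nonneg _) absConj_lt_one
  have := h0.add (tendsto_const_nhds (x := goldenRatio) (f := atTop))
  simpa using this

lemma pp_pair (n : ℕ) :
    (pp n = 0 ∧ pp (n+1) = 1) ∨ (pp n = 1 ∧ pp (n+1) = 1) ∨ (pp n = 1 ∧ pp (n+1) = 0) ∨
    (pp n = 0 ∧ pp (n+1) = -1) ∨ (pp n = -1 ∧ pp (n+1) = -1) ∨ (pp n = -1 ∧ pp (n+1) = 0) := by
  induction n with
  | zero => norm_num
  | succ n ih =>
    rcases ih with ⟨h1, h2⟩ | ⟨h1, h2⟩ | ⟨h1, h2⟩ | ⟨h1, h2⟩ | ⟨h1, h2⟩ | ⟨h1, h2⟩ <;>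
      norm_num [pp_add_two, h1, h2]

lemma pp_abs_le (n : ℕ) : |pp n| ≤ 1 := by
  rcases pp_pair n with ⟨h, -⟩ | ⟨h, -⟩ | ⟨h, -⟩ | ⟨h, -⟩ | ⟨h, -⟩ | ⟨h, -⟩ <;> norm_num [h]

/-- the limit expression -/
noncomputable def Ee (m : ℕ) : ℝ :=
  1/20 + (3/8) * (1/((m:ℝ)+1))
    + (3/20 + (9/40) * (1/((m:ℝ)+1))) * ((Nat.fib (m+1) : ℝ) / (Nat.fib m : ℝ))
    + (30*((pp m : ℤ):ℝ) - 30*((pp (m+1) : ℤ):ℝ)) / (80*((m:ℝ)+1)*(Nat.fib m : ℝ))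

lemma Ee_tendsto : Tendsto Ee atTop (nhds ((5 + 3 * Real.sqrt 5) / 40)) := by
  have hu : Tendsto (fun m : ℕ => 1/((m:ℝ)+1)) atTop (nhds 0) :=
    tendsto_one_div_add_atTop_nhds_zero_nat
  have hT : Tendsto (fun m : ℕ =>
      (30*((pp m : ℤ):ℝ) - 30*((pp (m+1) : ℤ):ℝ)) / (80*((m:ℝ)+1)*(Nat.fib m : ℝ)))
      atTop (nhds 0) := by
    apply squeeze_zero_norm' (a := fun m : ℕ => (3/4) * (1/((m:ℝ)+1)))
    · filter_upwards [eventually_ge_atTop 1] with m hm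
      have hf1 := fib_real_one_le hm
      have hm0 : (0:ℝ) ≤ (m:ℝ) := Nat.cast_nonneg m
      have hm1 : (1:ℝ) ≤ (m:ℝ) + 1 := by linarith
      have hnum : |30*((pp m : ℤ):ℝ) - 30*((pp (m+1) : ℤ):ℝ)| ≤ 60 := by
        have b1 : |((pp m : ℤ):ℝ)| ≤ 1 := by exact_mod_cast pp_abs_le m
        have b2 : |((pp (m+1) : ℤ):ℝ)| ≤ 1 := by exact_mod_cast pp_abs_le (m+1)
        calc |30*((pp m : ℤ):ℝ) - 30*((pp (m+1) : ℤ):ℝ)|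
            ≤ |30*((pp m : ℤ):ℝ)| + |30*((pp (m+1) : ℤ):ℝ)| := abs_sub _ _
          _ ≤ 30*1 + 30*1 := by
              rw [abs_mul, abs_mul]
              gcongr <;> norm_num
          _ = 60 := by norm_num
      have hden : (80:ℝ)*((m:ℝ)+1) ≤ |80*((m:ℝ)+1)*(Nat.fib m : ℝ)| := by
        rw [abs_of_pos (by positivity)]
        nlinarith
      rw [Real.norm_eq_abs, abs_div]
      calc |30*((pp m : ℤ):ℝ) - 30*((pp (m+1) : ℤ):ℝ)| / |80*((m:ℝ)+1)*(Nat.fib m : ℝ)|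
          ≤ 60 / (80*((m:ℝ)+1)) := by
            apply div_le_div₀ (by norm_num) hnum (by positivity) hden
        _ ≤ (3/4) * (1/((m:ℝ)+1)) := by
            apply le_of_eq
            have hne : ((m:ℝ)+1) ≠ 0 := by positivity
            field_simp
            ring
    · have := hu.const_mul (3/4 : ℝ)
      simpa using this
  have h1 : Tendsto (fun m : ℕ => 1/20 + (3/8) * (1/((m:ℝ)+1))) atTop (nhds (1/20)) := by
    have := (hu.const_mul (3/8 : ℝ)).const_add (1/20 : ℝ)
    simpa using this
  have h2 : Tendsto (fun m : ℕ => (3/20 + (9/40) * (1/((m:ℝ)+1)))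
      * ((Nat.fib (m+1) : ℝ) / (Nat.fib m : ℝ))) atTop (nhds ((3/20) * goldenRatio)) := by
    have hc : Tendsto (fun m : ℕ => (3/20 : ℝ) + (9/40) * (1/((m:ℝ)+1))) atTop (nhds (3/20)) := by
      have := (hu.const_mul (9/40 : ℝ)).const_add (3/20 : ℝ)
      simpa using this
    exact hc.mul ratio_tendsto
  have htot := (h1.add h2).add hT
  have hval : (1/20 : ℝ) + (3/20) * goldenRatio + 0 = (5 + 3 * Real.sqrt 5) / 40 := by
    rw [goldenRatio]
    ring
  rw [hval] at htot
  exact htot.congr (fun m => by rw [Ee])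
lemma Fz_cast (n : ℕ) : ((Fz n : ℤ) : ℝ) = (Nat.fib n : ℝ) := by
  rw [Fz]
  push_cast
  rfl

lemma val_eq {m : ℕ} (hm : 1 ≤ m) :
    (bimultusC (m+1) : ℝ) / (((m:ℝ)+1) * (bimultusCount (m+1) : ℝ)^2) = Ee m := by
  have hF : (0:ℝ) < (Nat.fib m : ℝ) := fib_real_pos hm
  have hd : (bimultusCount (m+1) : ℝ) = 2 * (Nat.fib m : ℝ) := by
    have h := d_closed m
    have h2 : ((bimultusCount (m+1) : ℤ) : ℝ) = ((2 * Fz m : ℤ) : ℝ) := by exact_mod_cast h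
    rw [Int.cast_mul, Fz_cast] at h2
    push_cast at h2 ⊢
    linarith
  have ha : (bimultusBitsum (m+1) : ℝ) = ((m:ℝ)+1) * (Nat.fib m : ℝ) := by
    have h := a_closed m
    have h2 : ((bimultusBitsum (m+1) : ℤ) : ℝ) = (((m+1 : ℤ)) * Fz m : ℤ) := by exact_mod_cast h
    rw [Int.cast_mul, Fz_cast] at h2
    push_cast at h2 ⊢
    linarith
  have hb : 40 * (bimultusBitsumSq (m+1) : ℝ)
      = (20*(m:ℝ)^2 + 44*(m:ℝ) + 54) * (Nat.fib m : ℝ) + (12*(m:ℝ) + 30) * (Nat.fib (m+1) : ℝ)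
        + 30*((pp m : ℤ):ℝ) - 30*((pp (m+1) : ℤ):ℝ) := by
    have h := b_closed m
    have h2 := congrArg (fun z : ℤ => (z : ℝ)) h
    simp only [Int.cast_mul, Int.cast_add, Int.cast_sub, Int.cast_ofNat, Fz_cast] at h2
    push_cast at h2 ⊢
    linarith
  have hC : (bimultusC (m+1) : ℝ) = (bimultusCount (m+1) : ℝ) * (bimultusBitsumSq (m+1) : ℝ)
      - (bimultusBitsum (m+1) : ℝ)^2 := by
    rw [bimultusC]
    push_cast
    ring
  have hb' : (bimultusBitsumSq (m+1) : ℝ)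
      = ((20*(m:ℝ)^2 + 44*(m:ℝ) + 54) * (Nat.fib m : ℝ) + (12*(m:ℝ) + 30) * (Nat.fib (m+1) : ℝ)
        + 30*((pp m : ℤ):ℝ) - 30*((pp (m+1) : ℤ):ℝ)) / 40 := by
    linarith
  rw [hC, hd, ha, hb', Ee]
  have hne : (Nat.fib m : ℝ) ≠ 0 := hF.ne'
  have hm0 : (0:ℝ) ≤ (m:ℝ) := Nat.cast_nonneg m
  have hm1 : ((m:ℝ)+1) ≠ 0 := by positivity
  field_simp
  ring

/-- The variance of the bitsum density for bimultus strings tends to `(5 + 3√5)/40`. -/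
theorem bimultus_variance_limit :
    Filter.Tendsto (fun n : ℕ => (bimultusC n : ℝ) / (n * (bimultusCount n : ℝ) ^ 2))
      Filter.atTop (nhds ((5 + 3 * Real.sqrt 5) / 40)) := by
  rw [← Filter.tendsto_add_atTop_iff_nat 1]
  apply Ee_tendsto.congr'
  filter_upwards [eventually_ge_atTop 1] with m hm
  have hcast : ((m+1 : ℕ):ℝ) = (m:ℝ)+1 := by push_cast; ring
  rw [hcast]
  exact (val_eq hm).symm
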